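/- For the unconstrained bilinear problem min_x max_y c^T x + y^T A x - b^T y, the operator F(z) = (c + A^T y, -Ax + b) satisfies the metric sub-regularity condition (s/2)·σ_min^+(A) · dist_{P_s}(z, Z*) ≤ dist_{P_s^{-1}}(0, F(z)) for all z ∈ R^{m+n}, when s ≤ 1/(2‖A‖), where Z* is the set of saddle points. -/

import Mathlib

open Matrix

/-- The ℓ₂ operator norm of a real matrix. -/
noncomputable def opNorm {m n : ℕ} (A : Matrix (Fin m) (Fin n) ℝ) : ℝ :=
  ‖LinearMap.toContinuousLinearMap (Matrix.toEuclideanLin A)‖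

/-- The PDHG matrix `P_s = [[(1/s)Iₙ, -Aᵀ], [-A, (1/s)Iₘ]]`. -/
noncomputable def Ps {m n : ℕ} (s : ℝ) (A : Matrix (Fin m) (Fin n) ℝ) :
    Matrix (Fin n ⊕ Fin m) (Fin n ⊕ Fin m) ℝ :=
  Matrix.fromBlocks ((1/s) • 1) (-Aᵀ) (-A) ((1/s) • 1)

/-- Quadratic form `⟨v, G v⟩`. -/
def qf {ι : Type*} [Fintype ι] (G : Matrix ι ι ℝ) (v : ι → ℝ) : ℝ := v ⬝ᵥ G.mulVec v

/-- Squared distance (in the quadratic form of `G`) from `0` to a set `S`. -/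
noncomputable def distSqTo {ι : Type*} [Fintype ι] (G : Matrix ι ι ℝ)
    (S : Set (ι → ℝ)) : ℝ := sInf (qf G '' S)

/-- The smallest nonzero singular value of `A`: the square root of the smallest
positive eigenvalue of `AᵀA`. -/
noncomputable def sigmaMinPos {m n : ℕ} (A : Matrix (Fin m) (Fin n) ℝ) : ℝ :=
  Real.sqrt (sInf {t : ℝ | 0 < t ∧ ∃ x : Fin n → ℝ, x ≠ 0 ∧ (Aᵀ * A).mulVec x = t • x})

/-! ### Auxiliary lemmas -/

lemma dot_self_nonneg' {ι : Type*} [Fintype ι] (v : ι → ℝ) : 0 ≤ v ⬝ᵥ v :=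
  Finset.sum_nonneg fun i _ => mul_self_nonneg (v i)

lemma transpose_eq_of_isHermitian' {ι : Type*} [Fintype ι] {M : Matrix ι ι ℝ}
    (hH : M.IsHermitian) : Mᵀ = M := by
  have h : Mᴴ = Mᵀ := by ext i j; simp [conjTranspose_apply]
  rw [← h, hH.eq]

lemma conjT_eq_transpose' {k l : Type*} (B : Matrix k l ℝ) : Bᴴ = Bᵀ := by
  ext i j; simp [conjTranspose_apply]

lemma inner_symm_dot {ι : Type*} [Fintype ι] (u v : ι → ℝ) :
    (inner ℝ ((WithLp.equiv 2 (ι → ℝ)).symm u) ((WithLp.equiv 2 (ι → ℝ)).symm v) : ℝ) = u ⬝ᵥ v := by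
  simp [PiLp.inner_apply, dotProduct, mul_comm]

lemma qf_cs {ι : Type*} [Fintype ι] (P : Matrix ι ι ℝ)
    (hsym : ∀ a b : ι → ℝ, a ⬝ᵥ P *ᵥ b = b ⬝ᵥ P *ᵥ a)
    (hpos : ∀ v : ι → ℝ, 0 ≤ v ⬝ᵥ P *ᵥ v) (a b : ι → ℝ) :
    (a ⬝ᵥ P *ᵥ b)^2 ≤ (a ⬝ᵥ P *ᵥ a) * (b ⬝ᵥ P *ᵥ b) := by
  have key : ∀ t : ℝ, 0 ≤ (b ⬝ᵥ P *ᵥ b) * (t*t) + (2*(a ⬝ᵥ P *ᵥ b))*t + (a ⬝ᵥ P *ᵥ a) := by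
    intro t
    have h := hpos (a + t • b)
    have expand : (a + t • b) ⬝ᵥ P *ᵥ (a + t • b)
        = (b ⬝ᵥ P *ᵥ b) * (t*t) + (2*(a ⬝ᵥ P *ᵥ b))*t + (a ⬝ᵥ P *ᵥ a) := by
      rw [mulVec_add, mulVec_smul, add_dotProduct, smul_dotProduct, dotProduct_add,
        dotProduct_add, dotProduct_smul, dotProduct_smul, smul_eq_mul, smul_eq_mul,
        smul_eq_mul, hsym b a]
      ring
    linarith [expand ▸ h]
  have hd := discrim_le_zero key
  rw [discrim] at hd
  nlinarith [hd]

lemma qf_inv_ge {ι : Type*} [Fintype ι] [DecidableEq ι] (P : Matrix ι ι ℝ) (C : ℝ) (hC : 0 < C)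
    (hsym : ∀ a b : ι → ℝ, a ⬝ᵥ P *ᵥ b = b ⬝ᵥ P *ᵥ a)
    (hpos : ∀ v : ι → ℝ, 0 ≤ v ⬝ᵥ P *ᵥ v)
    (hupp : ∀ v : ι → ℝ, v ⬝ᵥ P *ᵥ v ≤ C * (v ⬝ᵥ v))
    (hinv : P * P⁻¹ = 1) (v : ι → ℝ) :
    (1/C) * (v ⬝ᵥ v) ≤ v ⬝ᵥ P⁻¹ *ᵥ v := by
  set w := P⁻¹ *ᵥ v with hw
  have hPw : P *ᵥ w = v := by
    rw [hw, mulVec_mulVec, hinv, one_mulVec]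
  have hcs := qf_cs P hsym hpos v w
  rw [hPw] at hcs
  have h1 : w ⬝ᵥ P *ᵥ w = v ⬝ᵥ w := by rw [hPw, dotProduct_comm]
  rw [dotProduct_comm w v] at hcs
  have h2 : 0 ≤ v ⬝ᵥ w := by have := hpos w; rwa [h1] at this
  have h3 : v ⬝ᵥ P *ᵥ v ≤ C * (v ⬝ᵥ v) := hupp v
  have h4 : 0 ≤ v ⬝ᵥ P *ᵥ v := hpos v
  rcases eq_or_ne (v ⬝ᵥ v) 0 with h0 | h0
  · have hv : v = 0 := dotProduct_self_eq_zero.mp h0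
    simp [h0, hv]
  · have hnn : 0 ≤ v ⬝ᵥ v := dot_self_nonneg' v
    have hvv : 0 < v ⬝ᵥ v := lt_of_le_of_ne hnn (Ne.symm h0)
    rw [div_mul_eq_mul_div, div_le_iff₀ hC]
    nlinarith

lemma spec_bound {ι : Type*} [Fintype ι] [DecidableEq ι] (M : Matrix ι ι ℝ)
    (hM : M.PosSemidef) (σ2 : ℝ)
    (hσ : ∀ (t : ℝ) (x : ι → ℝ), 0 < t → x ≠ 0 → M *ᵥ x = t • x → σ2 ≤ t)
    (x : ι → ℝ) (hx : ∀ v : ι → ℝ, M *ᵥ v = 0 → x ⬝ᵥ v = 0) :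
    σ2 * (x ⬝ᵥ x) ≤ x ⬝ᵥ M *ᵥ x := by
  have hH := hM.1
  have hinner : ∀ (u v : ι → ℝ),
      (inner ℝ ((WithLp.equiv 2 (ι → ℝ)).symm u) ((WithLp.equiv 2 (ι → ℝ)).symm v) : ℝ)
        = u ⬝ᵥ v := by
    intro u v
    simp [PiLp.inner_apply, dotProduct, mul_comm]
  set b := hH.eigenvectorBasis with hb
  set μ := hH.eigenvalues with hμ
  set X : EuclideanSpace ℝ ι := (WithLp.equiv 2 (ι → ℝ)).symm x with hX
  have hXbi : ∀ i, (inner ℝ X (b i) : ℝ) = x ⬝ᵥ ⇑(b i) := fun i => hinner x ⇑(b i)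
  have hbiX : ∀ i, (inner ℝ (b i) X : ℝ) = x ⬝ᵥ ⇑(b i) := by
    intro i; rw [real_inner_comm]; exact hXbi i
  have hpar1 : ∑ i, (inner ℝ X (b i) : ℝ) * (inner ℝ (b i) X : ℝ) = x ⬝ᵥ x := by
    rw [b.sum_inner_mul_inner X X]; exact hinner x x
  set MX : EuclideanSpace ℝ ι := (WithLp.equiv 2 (ι → ℝ)).symm (M *ᵥ x) with hMXdef
  have hbiMX : ∀ i, (inner ℝ (b i) MX : ℝ) = μ i * (x ⬝ᵥ ⇑(b i)) := by
    intro i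
    have h1 : (inner ℝ (b i) MX : ℝ) = ⇑(b i) ⬝ᵥ (M *ᵥ x) := hinner ⇑(b i) (M *ᵥ x)
    have h2 : ⇑(b i) ⬝ᵥ (M *ᵥ x) = (M *ᵥ ⇑(b i)) ⬝ᵥ x := by
      rw [dotProduct_mulVec, ← mulVec_transpose, transpose_eq_of_isHermitian' hH]
    rw [h1, h2, hH.mulVec_eigenvectorBasis, smul_dotProduct, smul_eq_mul, dotProduct_comm]
  have hpar2 : ∑ i, (x ⬝ᵥ ⇑(b i)) * (μ i * (x ⬝ᵥ ⇑(b i))) = x ⬝ᵥ (M *ᵥ x) := by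
    have := b.sum_inner_mul_inner X MX
    calc ∑ i, (x ⬝ᵥ ⇑(b i)) * (μ i * (x ⬝ᵥ ⇑(b i)))
        = ∑ i, (inner ℝ X (b i) : ℝ) * (inner ℝ (b i) MX : ℝ) := by
          refine Finset.sum_congr rfl fun i _ => by rw [hXbi i, hbiMX i]
      _ = (inner ℝ X MX : ℝ) := this
      _ = x ⬝ᵥ (M *ᵥ x) := hinner x (M *ᵥ x)
  have hterm : ∀ i, σ2 * ((x ⬝ᵥ ⇑(b i)) * (x ⬝ᵥ ⇑(b i)))
      ≤ (x ⬝ᵥ ⇑(b i)) * (μ i * (x ⬝ᵥ ⇑(b i))) := by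
    intro i
    rcases eq_or_ne (x ⬝ᵥ ⇑(b i)) 0 with h0 | h0
    · simp [h0]
    · have hμnn : 0 ≤ μ i := hM.eigenvalues_nonneg i
      rcases eq_or_lt_of_le hμnn with heq | hpos
      · exfalso
        have hzero : hH.eigenvalues i = 0 := heq.symm
        have hker : M *ᵥ ⇑(b i) = 0 := by
          rw [hH.mulVec_eigenvectorBasis, hzero]; simp
        exact h0 (hx _ hker)
      · have hle : σ2 ≤ μ i := by
          refine hσ (μ i) ⇑(b i) hpos ?_ (hH.mulVec_eigenvectorBasis i)
          intro hzero
          have := b.orthonormal.ne_zero i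
          apply this
          ext j
          exact congrFun hzero j
        nlinarith [mul_self_nonneg (x ⬝ᵥ ⇑(b i))]
  calc σ2 * (x ⬝ᵥ x) = ∑ i, σ2 * ((x ⬝ᵥ ⇑(b i)) * (x ⬝ᵥ ⇑(b i))) := by
        rw [← Finset.mul_sum]
        congr 1
        rw [← hpar1]
        exact (Finset.sum_congr rfl fun i _ => by rw [hXbi i, hbiX i]).symm
    _ ≤ ∑ i, (x ⬝ᵥ ⇑(b i)) * (μ i * (x ⬝ᵥ ⇑(b i))) := Finset.sum_le_sum fun i _ => hterm i
    _ = x ⬝ᵥ M *ᵥ x := hpar2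

lemma dot_sq' {k l : Type*} [Fintype k] [Fintype l] (B : Matrix k l ℝ) (v : k → ℝ) :
    (Bᵀ *ᵥ v) ⬝ᵥ (Bᵀ *ᵥ v) = v ⬝ᵥ (B * Bᵀ) *ᵥ v := by
  rw [← mulVec_mulVec, dotProduct_mulVec, ← mulVec_transpose, transpose_transpose,
    dotProduct_comm]

set_option maxHeartbeats 800000 in
lemma op_bound {m n : ℕ} (A : Matrix (Fin m) (Fin n) ℝ) (x : Fin n → ℝ) (y : Fin m → ℝ) :
    |2 * (y ⬝ᵥ A *ᵥ x)| ≤ opNorm A * (x ⬝ᵥ x + y ⬝ᵥ y) := by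
  set X : EuclideanSpace ℝ (Fin n) := (WithLp.equiv 2 (Fin n → ℝ)).symm x with hXdef
  set Y : EuclideanSpace ℝ (Fin m) := (WithLp.equiv 2 (Fin m → ℝ)).symm y with hYdef
  set T := LinearMap.toContinuousLinearMap (Matrix.toEuclideanLin A) with hT
  have hTX : T X = (WithLp.equiv 2 (Fin m → ℝ)).symm (A *ᵥ x) := by
    rw [hT]
    simp only [LinearMap.coe_toContinuousLinearMap']
    rw [Matrix.toEuclideanLin_apply, hXdef]
    rfl
  have hinner : (inner ℝ Y (T X) : ℝ) = y ⬝ᵥ A *ᵥ x := by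
    rw [hTX, hYdef]
    simp [PiLp.inner_apply, dotProduct, mul_comm]
  have h1 : |(inner ℝ Y (T X) : ℝ)| ≤ ‖Y‖ * ‖T X‖ := abs_real_inner_le_norm Y (T X)
  have h2 : ‖T X‖ ≤ opNorm A * ‖X‖ := T.le_opNorm X
  have hx2 : ‖X‖^2 = x ⬝ᵥ x := by
    rw [hXdef, EuclideanSpace.real_norm_sq_eq]
    simp [dotProduct, sq]
  have hy2 : ‖Y‖^2 = y ⬝ᵥ y := by
    rw [hYdef, EuclideanSpace.real_norm_sq_eq]
    simp [dotProduct, sq]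
  have hN : 0 ≤ opNorm A := norm_nonneg _
  have hXn : 0 ≤ ‖X‖ := norm_nonneg _
  have hYn : 0 ≤ ‖Y‖ := norm_nonneg _
  rw [abs_mul, abs_two, ← hinner]
  have h3 : |(inner ℝ Y (T X) : ℝ)| ≤ opNorm A * (‖X‖ * ‖Y‖) := by
    calc |(inner ℝ Y (T X) : ℝ)| ≤ ‖Y‖ * ‖T X‖ := h1
      _ ≤ ‖Y‖ * (opNorm A * ‖X‖) := mul_le_mul_of_nonneg_left h2 hYn
      _ = opNorm A * (‖X‖ * ‖Y‖) := by ring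
  have h4 : 2 * (‖X‖ * ‖Y‖) ≤ ‖X‖^2 + ‖Y‖^2 := by nlinarith [sq_nonneg (‖X‖ - ‖Y‖)]
  rw [← hx2, ← hy2]
  nlinarith [h3, h4]

theorem stmt11 {m n : ℕ} (s : ℝ) (A : Matrix (Fin m) (Fin n) ℝ)
    (b : Fin m → ℝ) (c : Fin n → ℝ)
    (hs : 0 < s) (hsA : s ≤ 1 / (2 * opNorm A))
    (F : (Fin n ⊕ Fin m → ℝ) → (Fin n ⊕ Fin m → ℝ))
    (hF : ∀ z, F z = Sum.elim (c + Aᵀ.mulVec (fun j => z (Sum.inr j)))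
                             (b - A.mulVec (fun i => z (Sum.inl i))))
    (hZ : {z : Fin n ⊕ Fin m → ℝ | F z = 0}.Nonempty) :
    ∀ z : Fin n ⊕ Fin m → ℝ,
      (s/2) * sigmaMinPos A *
        Real.sqrt (distSqTo (Ps s A) ((fun u => z - u) '' {z' | F z' = 0}))
        ≤ Real.sqrt (qf (Ps s A)⁻¹ (F z)) := by
  intro z
  classical
  obtain ⟨z0, hz0⟩ := hZ
  have hN0 : 0 ≤ opNorm A := norm_nonneg _
  -- bound on the operator norm
  have hNbound : opNorm A ≤ 1/(2*s) := by
    rcases eq_or_lt_of_le hN0 with h0 | hpos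
    · rw [← h0]; positivity
    · have h1 : s * (2*opNorm A) ≤ 1 := by
        rw [le_div_iff₀ (by positivity)] at hsA; linarith
      rw [le_div_iff₀ (by positivity)]; nlinarith
  set P := Ps s A with hPdef
  -- symmetry of P
  have hPsymm : Pᵀ = P := by
    rw [hPdef, Ps, fromBlocks_transpose]
    simp [transpose_smul, transpose_one, transpose_neg, transpose_transpose]
  have hsym : ∀ a b : Fin n ⊕ Fin m → ℝ, a ⬝ᵥ P *ᵥ b = b ⬝ᵥ P *ᵥ a := by
    intro a b
    rw [dotProduct_mulVec, ← mulVec_transpose, hPsymm, dotProduct_comm]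
  -- the quadratic form of P
  have hqf_val : ∀ v : Fin n ⊕ Fin m → ℝ,
      v ⬝ᵥ P *ᵥ v = (1/s)*((fun i => v (Sum.inl i)) ⬝ᵥ (fun i => v (Sum.inl i))
          + (fun j => v (Sum.inr j)) ⬝ᵥ (fun j => v (Sum.inr j)))
        - 2*((fun j => v (Sum.inr j)) ⬝ᵥ A *ᵥ (fun i => v (Sum.inl i))) := by
    intro v
    set xx : Fin n → ℝ := fun i => v (Sum.inl i) with hxx
    set yy : Fin m → ℝ := fun j => v (Sum.inr j) with hyy
    have hv : v = Sum.elim xx yy := by funext t; cases t <;> rfl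
    rw [hv, hPdef, Ps, fromBlocks_mulVec, sumElim_dotProduct_sumElim]
    have e1 : xx ⬝ᵥ Aᵀ *ᵥ yy = yy ⬝ᵥ A *ᵥ xx := by
      rw [dotProduct_mulVec, vecMul_transpose, dotProduct_comm]
    rw [smul_mulVec, smul_mulVec, one_mulVec, one_mulVec, neg_mulVec, neg_mulVec]
    rw [dotProduct_add, dotProduct_add, dotProduct_neg, dotProduct_neg, dotProduct_smul,
      dotProduct_smul, smul_eq_mul, smul_eq_mul]
    simp only [Sum.elim_comp_inl, Sum.elim_comp_inr]
    rw [e1]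
    ring
  -- upper and lower bounds for the quadratic form of P
  have hqfbounds : ∀ v : Fin n ⊕ Fin m → ℝ,
      (1/(2*s)) * (v ⬝ᵥ v) ≤ v ⬝ᵥ P *ᵥ v ∧ v ⬝ᵥ P *ᵥ v ≤ (2/s) * (v ⬝ᵥ v) := by
    intro v
    set xx : Fin n → ℝ := fun i => v (Sum.inl i) with hxx
    set yy : Fin m → ℝ := fun j => v (Sum.inr j) with hyy
    have hv : v = Sum.elim xx yy := by funext t; cases t <;> rfl
    have hvv : v ⬝ᵥ v = xx ⬝ᵥ xx + yy ⬝ᵥ yy := by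
      rw [hv, sumElim_dotProduct_sumElim]
    have hEnn : 0 ≤ xx ⬝ᵥ xx + yy ⬝ᵥ yy :=
      add_nonneg (dot_self_nonneg' xx) (dot_self_nonneg' yy)
    have hcross : |2 * (yy ⬝ᵥ A *ᵥ xx)| ≤ opNorm A * (xx ⬝ᵥ xx + yy ⬝ᵥ yy) := op_bound A xx yy
    have hcross2 : |2 * (yy ⬝ᵥ A *ᵥ xx)| ≤ (1/(2*s)) * (xx ⬝ᵥ xx + yy ⬝ᵥ yy) :=
      le_trans hcross (mul_le_mul_of_nonneg_right hNbound hEnn)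
    have habs := abs_le.mp hcross2
    have hval := hqf_val v
    rw [hvv, hval]
    have h1s : (0:ℝ) < 1/s := by positivity
    constructor
    · have : (1/(2*s)) * (xx ⬝ᵥ xx + yy ⬝ᵥ yy) = (1/s) * (xx ⬝ᵥ xx + yy ⬝ᵥ yy)
          - (1/(2*s)) * (xx ⬝ᵥ xx + yy ⬝ᵥ yy) := by
        field_simp; ring
      rw [this]
      linarith [habs.2]
    · have : (2/s) * (xx ⬝ᵥ xx + yy ⬝ᵥ yy) = (1/s) * (xx ⬝ᵥ xx + yy ⬝ᵥ yy)
          + (1/s) * (xx ⬝ᵥ xx + yy ⬝ᵥ yy) := by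
        field_simp; ring
      rw [this]
      have h5 : (1/(2*s)) * (xx ⬝ᵥ xx + yy ⬝ᵥ yy) ≤ (1/s) * (xx ⬝ᵥ xx + yy ⬝ᵥ yy) := by
        apply mul_le_mul_of_nonneg_right _ hEnn
        rw [div_le_div_iff₀ (by positivity) (by positivity)]; nlinarith
      linarith [habs.1]
  have hpos : ∀ v : Fin n ⊕ Fin m → ℝ, 0 ≤ v ⬝ᵥ P *ᵥ v := by
    intro v
    refine le_trans ?_ (hqfbounds v).1
    have := dot_self_nonneg' v
    positivity
  -- P is positive definite, hence invertible
  have hherm : P.IsHermitian := by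
    have h : Pᴴ = Pᵀ := conjT_eq_transpose' P
    exact h.trans hPsymm
  have hPD : P.PosDef := by
    refine Matrix.PosDef.of_dotProduct_mulVec_pos hherm (fun v hv => ?_)
    have h1 : (0:ℝ) < v ⬝ᵥ v :=
      lt_of_le_of_ne (dot_self_nonneg' v) (Ne.symm (fun h => hv (dotProduct_self_eq_zero.mp h)))
    have h2 := (hqfbounds v).1
    have : (0:ℝ) < (1/(2*s)) * (v ⬝ᵥ v) := by positivity
    have h3 : (0:ℝ) < v ⬝ᵥ P *ᵥ v := lt_of_lt_of_le this h2
    simpa [star_trivial] using h3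
  have hinv : P * P⁻¹ = 1 := Matrix.mul_nonsing_inv P (isUnit_iff_ne_zero.mpr hPD.det_pos.ne')
  -- the affine structure of F
  set K : Matrix (Fin n ⊕ Fin m) (Fin n ⊕ Fin m) ℝ :=
    fromBlocks (0 : Matrix (Fin n) (Fin n) ℝ) Aᵀ (-A) (0 : Matrix (Fin m) (Fin m) ℝ) with hKdef
  set q : Fin n ⊕ Fin m → ℝ := Sum.elim c b with hqdef
  have hFeq : ∀ u : Fin n ⊕ Fin m → ℝ, F u = q + K *ᵥ u := by
    intro u
    have hu : u = Sum.elim (fun i => u (Sum.inl i)) (fun j => u (Sum.inr j)) := by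
      funext t; cases t <;> rfl
    rw [hF]
    funext t
    rw [show K *ᵥ u = K *ᵥ Sum.elim (fun i => u (Sum.inl i)) (fun j => u (Sum.inr j)) by rw [← hu]]
    rw [hKdef, fromBlocks_mulVec]
    cases t with
    | inl i => simp [hqdef, zero_mulVec, neg_mulVec]
    | inr j => simp [hqdef, zero_mulVec, neg_mulVec, sub_eq_add_neg]
  have hz00 : F z0 = 0 := hz0
  set Eqv := WithLp.equiv 2 (Fin n ⊕ Fin m → ℝ) with hEqv
  set V : Submodule ℝ (EuclideanSpace ℝ (Fin n ⊕ Fin m)) :=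
    LinearMap.ker (Matrix.toEuclideanLin K) with hV
  have hVmem : ∀ v' : Fin n ⊕ Fin m → ℝ, K *ᵥ v' = 0 → (Eqv.symm v') ∈ V := by
    intro v' h
    rw [hV, LinearMap.mem_ker, Matrix.toEuclideanLin_apply]
    simp [hEqv, h]
  have hVmem' : ∀ v : EuclideanSpace ℝ (Fin n ⊕ Fin m), v ∈ V → K *ᵥ (Eqv v) = 0 := by
    intro v hvmem
    rw [hV, LinearMap.mem_ker, Matrix.toEuclideanLin_apply] at hvmem
    have h2 := congrArg Eqv hvmem
    rw [hEqv] at h2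
    have h3 : K *ᵥ v.ofLp = 0 := by simpa using h2
    exact h3
  set W : EuclideanSpace ℝ (Fin n ⊕ Fin m) := Eqv.symm (z - z0) with hW
  set pr : EuclideanSpace ℝ (Fin n ⊕ Fin m) :=
    (↑(V.orthogonalProjection W) : EuclideanSpace ℝ (Fin n ⊕ Fin m)) with hpr
  set w : Fin n ⊕ Fin m → ℝ := z - z0 - Eqv pr with hwdef
  have hsymmw : Eqv.symm w = W - pr := by
    rw [Equiv.symm_apply_eq, hwdef, hW]
    rfl
  have hprV : pr ∈ V := SetLike.coe_mem _
  have horthW : W - pr ∈ Vᗮ := V.sub_starProjection_mem_orthogonal W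
  have horth : ∀ v' : Fin n ⊕ Fin m → ℝ, K *ᵥ v' = 0 → w ⬝ᵥ v' = 0 := by
    intro v' h
    have hmem := hVmem v' h
    have h0 : (inner ℝ (Eqv.symm v') (W - pr) : ℝ) = 0 :=
      (Submodule.mem_orthogonal V (W - pr)).mp horthW _ hmem
    have h1 : (inner ℝ (Eqv.symm w) (Eqv.symm v') : ℝ) = w ⬝ᵥ v' := inner_symm_dot w v'
    rw [hsymmw] at h1
    rw [← h1, real_inner_comm, h0]
  have hKpr : K *ᵥ (Eqv pr) = 0 := hVmem' pr hprV
  have huZ : F (z - w) = 0 := by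
    rw [hFeq]
    have h1 : z - w = z0 + Eqv pr := by
      rw [hwdef]; funext t; simp; ring
    rw [h1, mulVec_add, hKpr, add_zero]
    exact ((hFeq z0).symm.trans hz00)
  have hFzKw : F z = K *ᵥ w := by
    calc F z = q + K *ᵥ z := hFeq z
      _ = (q + K *ᵥ (z - w)) + K *ᵥ w := by rw [mulVec_sub]; abel
      _ = K *ᵥ w := by rw [← hFeq (z - w), huZ, zero_add]
  set wx : Fin n → ℝ := fun i => w (Sum.inl i) with hwx
  set wy : Fin m → ℝ := fun j => w (Sum.inr j) with hwy
  have hwsum : w = Sum.elim wx wy := by funext t; cases t <;> rfl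
  have hAwx_orth : ∀ p : Fin n → ℝ, A *ᵥ p = 0 → wx ⬝ᵥ p = 0 := by
    intro p hp
    have hK : K *ᵥ (Sum.elim p 0) = 0 := by
      rw [hKdef, fromBlocks_mulVec]
      funext t
      cases t with
      | inl i => simp
      | inr j => simp [neg_mulVec, hp]
    have h1 := horth _ hK
    rw [hwsum, sumElim_dotProduct_sumElim] at h1
    simpa using h1
  have hATwy_orth : ∀ p : Fin m → ℝ, Aᵀ *ᵥ p = 0 → wy ⬝ᵥ p = 0 := by
    intro p hp
    have hK : K *ᵥ (Sum.elim 0 p) = 0 := by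
      rw [hKdef, fromBlocks_mulVec]
      funext t
      cases t with
      | inl i => simp [hp]
      | inr j => simp [neg_mulVec]
    have h1 := horth _ hK
    rw [hwsum, sumElim_dotProduct_sumElim] at h1
    simpa using h1
  -- the smallest positive eigenvalue
  set σ2 := sInf {t : ℝ | 0 < t ∧ ∃ x : Fin n → ℝ, x ≠ 0 ∧ (Aᵀ * A).mulVec x = t • x} with hσ2
  have hbddσ : BddBelow {t : ℝ | 0 < t ∧ ∃ x : Fin n → ℝ, x ≠ 0 ∧ (Aᵀ * A).mulVec x = t • x} :=
    ⟨0, fun r hr => hr.1.le⟩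
  have hσ2nn : 0 ≤ σ2 := Real.sInf_nonneg (fun t ht => ht.1.le)
  have hσle : ∀ (t : ℝ) (x : Fin n → ℝ), 0 < t → x ≠ 0 → (Aᵀ*A) *ᵥ x = t • x → σ2 ≤ t :=
    fun t x ht hx he => csInf_le hbddσ ⟨ht, x, hx, he⟩
  have hσle' : ∀ (t : ℝ) (y : Fin m → ℝ), 0 < t → y ≠ 0 → (A*Aᵀ) *ᵥ y = t • y → σ2 ≤ t := by
    intro t y ht hy he
    have hne : Aᵀ *ᵥ y ≠ 0 := by
      intro h0
      have h1 : (A*Aᵀ) *ᵥ y = 0 := by rw [← mulVec_mulVec, h0, mulVec_zero]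
      rw [he] at h1
      rcases smul_eq_zero.mp h1 with h | h
      · exact absurd h ht.ne'
      · exact hy h
    apply hσle t (Aᵀ *ᵥ y) ht hne
    rw [mulVec_mulVec, Matrix.mul_assoc, ← mulVec_mulVec, he, mulVec_smul]
  have hPSD1 : (Aᵀ*A).PosSemidef := by
    have h := Matrix.posSemidef_conjTranspose_mul_self A
    rwa [conjT_eq_transpose'] at h
  have hPSD2 : (A*Aᵀ).PosSemidef := by
    have h := Matrix.posSemidef_self_mul_conjTranspose A
    rwa [conjT_eq_transpose'] at h
  have hwx_orthker : ∀ v : Fin n → ℝ, (Aᵀ*A) *ᵥ v = 0 → wx ⬝ᵥ v = 0 := by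
    intro v hv
    apply hAwx_orth
    have h3 : v ⬝ᵥ (Aᵀ*A) *ᵥ v = (A *ᵥ v) ⬝ᵥ (A *ᵥ v) := by
      rw [← mulVec_mulVec, dotProduct_mulVec, vecMul_transpose]
    have h1 : (A *ᵥ v) ⬝ᵥ (A *ᵥ v) = 0 := by rw [← h3, hv, dotProduct_zero]
    exact dotProduct_self_eq_zero.mp h1
  have hwy_orthker : ∀ v : Fin m → ℝ, (A*Aᵀ) *ᵥ v = 0 → wy ⬝ᵥ v = 0 := by
    intro v hv
    apply hATwy_orth
    have h3 := dot_sq' A v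
    have h1 : (Aᵀ *ᵥ v) ⬝ᵥ (Aᵀ *ᵥ v) = 0 := by rw [h3, hv, dotProduct_zero]
    exact dotProduct_self_eq_zero.mp h1
  have hx2 : σ2 * (wx ⬝ᵥ wx) ≤ wx ⬝ᵥ (Aᵀ*A) *ᵥ wx :=
    spec_bound _ hPSD1 σ2 hσle wx hwx_orthker
  have hy2 : σ2 * (wy ⬝ᵥ wy) ≤ wy ⬝ᵥ (A*Aᵀ) *ᵥ wy :=
    spec_bound _ hPSD2 σ2 hσle' wy hwy_orthker
  have hFF : (F z) ⬝ᵥ (F z) = wx ⬝ᵥ (Aᵀ*A) *ᵥ wx + wy ⬝ᵥ (A*Aᵀ) *ᵥ wy := by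
    rw [hFzKw, hwsum, hKdef, fromBlocks_mulVec, sumElim_dotProduct_sumElim]
    simp only [Sum.elim_comp_inl, Sum.elim_comp_inr]
    rw [zero_mulVec, zero_mulVec, add_zero, zero_add, neg_mulVec, neg_dotProduct,
      dotProduct_neg, neg_neg]
    rw [dot_sq' A wy]
    have h4 : (A *ᵥ wx) ⬝ᵥ (A *ᵥ wx) = wx ⬝ᵥ (Aᵀ*A) *ᵥ wx := by
      have h5 := dot_sq' Aᵀ wx
      rwa [transpose_transpose] at h5
    rw [h4]
    ring
  have hww : w ⬝ᵥ w = wx ⬝ᵥ wx + wy ⬝ᵥ wy := by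
    rw [hwsum, sumElim_dotProduct_sumElim]
  -- distance bound
  have hzmem : w ∈ ((fun u => z - u) '' {z' | F z' = 0}) :=
    ⟨z - w, huZ, by simp⟩
  have hbdd2 : BddBelow (qf P '' ((fun u => z - u) '' {z' | F z' = 0})) := by
    refine ⟨0, ?_⟩
    rintro r ⟨v, _, rfl⟩
    exact hpos v
  have hDle : distSqTo P ((fun u => z - u) '' {z' | F z' = 0}) ≤ qf P w :=
    csInf_le hbdd2 ⟨w, hzmem, rfl⟩
  have hD0 : 0 ≤ distSqTo P ((fun u => z - u) '' {z' | F z' = 0}) := by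
    apply Real.sInf_nonneg
    rintro r ⟨v, _, rfl⟩
    exact hpos v
  set D := distSqTo P ((fun u => z - u) '' {z' | F z' = 0}) with hD
  have hRlow : (s/2) * ((F z) ⬝ᵥ (F z)) ≤ qf P⁻¹ (F z) := by
    have h := qf_inv_ge P (2/s) (by positivity) hsym hpos (fun v => (hqfbounds v).2) hinv (F z)
    rwa [show (1:ℝ)/(2/s) = s/2 by field_simp] at h
  have hFznn : 0 ≤ (F z) ⬝ᵥ (F z) := dot_self_nonneg' (F z)
  have hR0 : 0 ≤ qf P⁻¹ (F z) := le_trans (by positivity) hRlow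
  have hchain : ((s/2)^2 * σ2) * D ≤ qf P⁻¹ (F z) := by
    have h1 : D ≤ (2/s) * (w ⬝ᵥ w) := le_trans hDle (hqfbounds w).2
    have h2 : σ2 * (w ⬝ᵥ w) ≤ (F z) ⬝ᵥ (F z) := by
      rw [hFF, hww, mul_add]
      exact add_le_add hx2 hy2
    calc ((s/2)^2 * σ2) * D ≤ ((s/2)^2 * σ2) * ((2/s) * (w ⬝ᵥ w)) :=
          mul_le_mul_of_nonneg_left h1 (by positivity)
      _ = (s/2) * (σ2 * (w ⬝ᵥ w)) := by field_simp
      _ ≤ (s/2) * ((F z) ⬝ᵥ (F z)) := mul_le_mul_of_nonneg_left h2 (by positivity)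
      _ ≤ qf P⁻¹ (F z) := hRlow
  have hσdef : sigmaMinPos A = Real.sqrt σ2 := by rw [hσ2]; rfl
  rw [hσdef]
  have hLHS : (s/2) * Real.sqrt σ2 * Real.sqrt D = Real.sqrt (((s/2)^2 * σ2) * D) := by
    rw [Real.sqrt_mul (by positivity : (0:ℝ) ≤ (s/2)^2 * σ2),
      Real.sqrt_mul (by positivity : (0:ℝ) ≤ (s/2)^2),
      Real.sqrt_sq (by positivity : (0:ℝ) ≤ s/2)]
  rw [hLHS]
  exact Real.sqrt_le_sqrt hchain
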